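/- Let G be a free group with free generators a_1,…,a_N, and let H_Λ be the Hilbert space with orthonormal basis {e_{(g,h)} : g⁻¹h = a_j for some j}, with the convention e_{(g,h)} = −e_{(h,g)} when g⁻¹h = a_j⁻¹. Define Φ(g) = e_{(f_0,f_1)} + ⋯ + e_{(f_{n−1},f_n)} where g = g_1⋯g_n is the reduced word for g, f_0 = e, and f_{ℓ−1}⁻¹f_ℓ = g_ℓ. Then ‖Φ(g) − Φ(h)‖²_{H_Λ} = |h⁻¹g| for all g, h ∈ G; in particular Φ is injective. -/

import Mathlib

open scoped InnerProductSpace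

/-- The edges of the Cayley-tree geodesic from the identity to `g` in the free group on
`N` generators that are traversed in the direction of a generator: pairs `(u, j)` such
that the geodesic passes from `u` to `u·aⱼ` (i.e. `|u| + 1 + |(u aⱼ)⁻¹ g| = |g|`).
These are the pairs `(f_{ℓ−1}, f_ℓ)` of the prefix sequence of the reduced word of `g`
with `f_{ℓ−1}⁻¹ f_ℓ = aⱼ`, contributing `+e_{(f_{ℓ−1},f_ℓ)}` to `Φ(g)`. -/
def fwdEdges (N : ℕ) (g : FreeGroup (Fin N)) : Set (FreeGroup (Fin N) × Fin N) :=
  {p | FreeGroup.norm p.1 + 1 + FreeGroup.norm ((p.1 * FreeGroup.of p.2)⁻¹ * g)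
        = FreeGroup.norm g}

/-- The edges of the geodesic from the identity to `g` traversed in the direction of an
inverse generator: pairs `(u, j)` such that the geodesic passes from `u·aⱼ` to `u`
(i.e. `|u·aⱼ| + 1 + |u⁻¹ g| = |g|`).  These are the pairs `(f_{ℓ−1}, f_ℓ)` with
`f_{ℓ−1}⁻¹ f_ℓ = aⱼ⁻¹`; by the convention `e_{(g,h)} = −e_{(h,g)}` they contribute
`−e_{(u, u·aⱼ)}` to `Φ(g)`. -/
def bwdEdges (N : ℕ) (g : FreeGroup (Fin N)) : Set (FreeGroup (Fin N) × Fin N) :=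
  {p | FreeGroup.norm (p.1 * FreeGroup.of p.2) + 1 + FreeGroup.norm (p.1⁻¹ * g)
        = FreeGroup.norm g}

set_option linter.unusedSectionVars false


namespace HaagerupAux
open FreeGroup List

variable {α : Type*} [DecidableEq α]

/-- The non-cancellation relation between adjacent letters of a word. -/
def Rel (a b : α × Bool) : Prop := ¬(a.1 = b.1 ∧ a.2 = !b.2)

instance : DecidableRel (Rel (α := α)) := fun _ _ => by unfold Rel; infer_instance

lemma reduce_eq_self {L : List (α × Bool)} (h : L.Chain' Rel) : FreeGroup.reduce L = L := by
  induction L with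
  | nil => rfl
  | cons x L ih =>
    rw [FreeGroup.reduce.cons, ih h.tail]
    cases L with
    | nil => rfl
    | cons y t =>
      have hr : Rel x y := (List.isChain_cons_cons.mp h).1
      simp only [Rel] at hr
      simp [hr]

lemma chain'_of_no_cancel {M : List (α × Bool)}
    (h : ∀ (x : α) (b : Bool) (L₂ L₃), M ≠ L₂ ++ (x, b) :: (x, !b) :: L₃) :
    M.Chain' Rel := by
  induction M with
  | nil => exact List.isChain_nil
  | cons a M ih =>
    cases M with
    | nil => exact List.isChain_singleton _
    | cons c M' =>
      show List.IsChain _ _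
      rw [List.isChain_cons_cons]
      refine ⟨?_, ih fun x b L₂ L₃ heq => h x b (a :: L₂) L₃ (by rw [heq]; rfl)⟩
      rintro ⟨h1, h2⟩
      have hc : c = (a.1, !a.2) := by
        rcases c with ⟨c1, c2⟩; simp_all
      exact h a.1 a.2 [] M' (by simp [hc])

lemma reduce_chain' (L : List (α × Bool)) : (FreeGroup.reduce L).Chain' Rel :=
  chain'_of_no_cancel fun _ _ _ _ h => FreeGroup.reduce.not h

lemma toWord_chain' (g : FreeGroup α) : g.toWord.Chain' Rel := by
  rw [← FreeGroup.reduce_toWord]; exact reduce_chain' _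

lemma toWord_mk_eq {L : List (α × Bool)} (h : L.Chain' Rel) : (FreeGroup.mk L).toWord = L := by
  rw [FreeGroup.toWord_mk, reduce_eq_self h]

lemma norm_mk_eq {L : List (α × Bool)} (h : L.Chain' Rel) :
    (FreeGroup.mk L).norm = L.length := by
  rw [FreeGroup.norm, toWord_mk_eq h]

lemma norm_toWord (g : FreeGroup α) : g.norm = g.toWord.length := rfl

lemma red_eq_of_length {L₁ L₂ : List (α × Bool)} (h : FreeGroup.Red L₁ L₂)
    (hl : L₁.length = L₂.length) : L₁ = L₂ := by
  rcases Relation.ReflTransGen.cases_head h with rfl | ⟨L₃, hs, hr⟩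
  · rfl
  · have h1 := hs.length
    have h2 := FreeGroup.Red.length_le hr
    omega


lemma toWord_mul (x y : FreeGroup α) :
    (x * y).toWord = FreeGroup.reduce (x.toWord ++ y.toWord) := by
  conv_lhs => rw [← FreeGroup.mk_toWord (x := x), ← FreeGroup.mk_toWord (x := y)]
  rw [FreeGroup.mul_mk, FreeGroup.toWord_mk]

/-- Key lemma: `u` lies on the geodesic from `1` to `g` iff its word is a prefix. -/
lemma norm_add_eq_iff_prefix (u g : FreeGroup α) :
    u.norm + (u⁻¹ * g).norm = g.norm ↔ u.toWord <+: g.toWord := by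
  constructor
  · intro h
    have h2 : g = u * (u⁻¹ * g) := by group
    have h3 : g.toWord = FreeGroup.reduce (u.toWord ++ (u⁻¹ * g).toWord) := by
      conv_lhs => rw [h2]
      exact toWord_mul _ _
    have h4 : u.toWord ++ (u⁻¹ * g).toWord = g.toWord := by
      rw [h3]
      refine red_eq_of_length (FreeGroup.reduce.red) ?_
      rw [← h3]
      simp only [List.length_append, ← norm_toWord]
      omega
    exact ⟨_, h4⟩
  · rintro ⟨t, ht⟩
    have htred : t.Chain' Rel := (toWord_chain' g).suffix ⟨_, ht⟩
    have hug : u⁻¹ * g = FreeGroup.mk t := by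
      have : g = u * FreeGroup.mk t := by
        conv_lhs => rw [← FreeGroup.mk_toWord (x := g), ← ht]
        rw [← FreeGroup.mul_mk, FreeGroup.mk_toWord]
      rw [this]; group
    have h5 : g.norm = u.toWord.length + t.length := by
      rw [norm_toWord, ← ht, List.length_append]
    rw [hug, norm_mk_eq htred]
    have hu : u.norm = u.toWord.length := rfl
    omega

/-- One edge step: norm characterization of an edge on the geodesic to `g`. -/
lemma edge_norm_iff (u g : FreeGroup α) (j : α) (b : Bool) :
    u.norm + 1 + ((u * FreeGroup.mk [(j, b)])⁻¹ * g).norm = g.norm ↔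
      u.toWord ++ [(j, b)] <+: g.toWord := by
  have hmk : FreeGroup.mk (u.toWord ++ [(j, b)]) = u * FreeGroup.mk [(j, b)] := by
    rw [← FreeGroup.mul_mk, FreeGroup.mk_toWord]
  constructor
  · intro h
    set v := u * FreeGroup.mk [(j, b)] with hv
    have h1 : v.norm ≤ u.norm + 1 := by
      have h0 : (FreeGroup.mk [(j, b)]).norm ≤ 1 := FreeGroup.norm_mk_le
      calc v.norm ≤ u.norm + (FreeGroup.mk [(j, b)]).norm := FreeGroup.norm_mul_le _ _
      _ ≤ u.norm + 1 := by omega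
    have h2 : g.norm ≤ v.norm + (v⁻¹ * g).norm := by
      have : g = v * (v⁻¹ * g) := by group
      conv_lhs => rw [this]
      exact FreeGroup.norm_mul_le _ _
    have h3 : v.norm = u.norm + 1 := by omega
    have h4 : v.norm + (v⁻¹ * g).norm = g.norm := by omega
    have h5 := (norm_add_eq_iff_prefix v g).mp h4
    have h7 : FreeGroup.Red (u.toWord ++ [(j, b)]) v.toWord := by
      rw [← hmk, FreeGroup.toWord_mk]
      exact FreeGroup.reduce.red
    have h8 : v.toWord = u.toWord ++ [(j, b)] := by
      refine (red_eq_of_length h7 ?_).symm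
      simp only [List.length_append, List.length_cons, List.length_nil, ← norm_toWord]
      omega
    rwa [h8] at h5
  · intro hp
    have hred : (u.toWord ++ [(j, b)]).Chain' Rel := (toWord_chain' g).prefix hp
    have h6 : (u * FreeGroup.mk [(j, b)]).toWord = u.toWord ++ [(j, b)] := by
      rw [← hmk, toWord_mk_eq hred]
    have h7 : (u * FreeGroup.mk [(j, b)]).norm = u.norm + 1 := by
      simp [norm_toWord, h6]
    have h8 := (norm_add_eq_iff_prefix (u * FreeGroup.mk [(j, b)]) g).mpr (by rwa [h6])
    omega

lemma of_eq_mk (j : α) : FreeGroup.of j = FreeGroup.mk [(j, true)] := rfl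

lemma inv_of_eq (j : α) : (FreeGroup.of j)⁻¹ = FreeGroup.mk [(j, false)] := by
  rw [of_eq_mk, FreeGroup.inv_mk]
  rfl


/-! ### Longest common prefix -/

variable {τ : Type*} [DecidableEq τ]

/-- Longest common prefix of two lists. -/
def cp : List τ → List τ → List τ
  | a :: s, b :: t => if a = b then a :: cp s t else []
  | _, _ => []

lemma cp_nil_left (t : List τ) : cp [] t = [] := by cases t <;> rfl
lemma cp_nil_right (s : List τ) : cp s [] = [] := by cases s <;> rfl

lemma cp_prefix_left : ∀ s t : List τ, cp s t <+: s
  | [], t => by simp [cp_nil_left]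
  | a :: s, [] => by simp [cp_nil_right]
  | a :: s, b :: t => by
    by_cases h : a = b
    · simpa [cp, h, List.cons_prefix_cons] using cp_prefix_left s t
    · simp [cp, h]

lemma cp_prefix_right : ∀ s t : List τ, cp s t <+: t
  | [], t => by simp [cp_nil_left]
  | a :: s, [] => by simp [cp_nil_right]
  | a :: s, b :: t => by
    by_cases h : a = b
    · subst h; simpa [cp, List.cons_prefix_cons] using cp_prefix_right s t
    · simp [cp, h]

lemma prefix_cp : ∀ {u s t : List τ}, u <+: s → u <+: t → u <+: cp s t
  | [], _, _, _, _ => List.nil_prefix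
  | a :: u, s, t, hs, ht => by
    cases s with
    | nil => exact absurd (List.eq_nil_of_prefix_nil hs) (by simp)
    | cons a' s =>
      cases t with
      | nil => exact absurd (List.eq_nil_of_prefix_nil ht) (by simp)
      | cons b t =>
        rw [List.cons_prefix_cons] at hs ht
        obtain ⟨rfl, hs⟩ := hs
        obtain ⟨rfl, ht⟩ := ht
        rw [show cp (a :: s) (a :: t) = a :: cp s t from by simp [cp]]
        exact List.cons_prefix_cons.mpr ⟨rfl, prefix_cp hs ht⟩

lemma prefix_cp_iff {u s t : List τ} : u <+: cp s t ↔ u <+: s ∧ u <+: t :=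
  ⟨fun h => ⟨h.trans (cp_prefix_left s t), h.trans (cp_prefix_right s t)⟩,
   fun ⟨h1, h2⟩ => prefix_cp h1 h2⟩

lemma cp_heads : ∀ s t : List τ,
    (s.drop (cp s t).length).head? = (t.drop (cp s t).length).head? →
    s.drop (cp s t).length = []
  | [], t => by simp [cp_nil_left]
  | a :: s, [] => by simp [cp_nil_right]
  | a :: s, b :: t => by
    by_cases h : a = b
    · subst h
      rw [show cp (a :: s) (a :: t) = a :: cp s t from by simp [cp]]
      simp only [List.length_cons, List.drop_succ_cons]
      exact cp_heads s t
    · simp only [cp, if_neg h, List.length_nil, List.drop_zero, List.head?_cons]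
      intro he
      exact absurd (Option.some.inj he) h


lemma rel_invRev {a b : α × Bool} (h : Rel a b) : Rel (b.1, !b.2) (a.1, !a.2) := by
  rintro ⟨e1, e2⟩
  exact h ⟨e1.symm, by simp only at e2; cases ha : a.2 <;> cases hb : b.2 <;> simp_all⟩

/-- The tree formula: `|h⁻¹g| + 2·(common prefix length) = |g| + |h|`. -/
lemma norm_inv_mul_add (g h : FreeGroup α) :
    (h⁻¹ * g).norm + 2 * (cp g.toWord h.toWord).length = g.norm + h.norm := by
  set w₁ := g.toWord with hw₁
  set w₂ := h.toWord with hw₂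
  set c := cp w₁ w₂ with hc
  obtain ⟨x, hx⟩ := cp_prefix_left w₁ w₂
  obtain ⟨y, hy⟩ := cp_prefix_right w₁ w₂
  rw [← hc] at hx hy
  have hdx : w₁.drop c.length = x := by rw [← hx, List.drop_left]
  have hdy : w₂.drop c.length = y := by rw [← hy, List.drop_left]
  have hhd : x.head? = y.head? → x = [] := by
    rw [← hdx, ← hdy]; exact cp_heads w₁ w₂
  have hg : FreeGroup.mk c * FreeGroup.mk x = g := by
    rw [FreeGroup.mul_mk, hx, hw₁, FreeGroup.mk_toWord]
  have hh : FreeGroup.mk c * FreeGroup.mk y = h := by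
    rw [FreeGroup.mul_mk, hy, hw₂, FreeGroup.mk_toWord]
  have hgh : h⁻¹ * g = FreeGroup.mk (FreeGroup.invRev y ++ x) := by
    rw [← FreeGroup.mul_mk, ← FreeGroup.inv_mk, ← hg, ← hh]
    group
  have hcx : x.Chain' Rel := (toWord_chain' g).suffix ⟨c, hx⟩
  have hcy : y.Chain' Rel := (toWord_chain' h).suffix ⟨c, hy⟩
  have hinv : (FreeGroup.invRev y).Chain' Rel := by
    unfold FreeGroup.invRev
    show List.IsChain _ _
    rw [List.isChain_reverse, List.isChain_map]
    exact hcy.imp fun a b hab => rel_invRev hab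
  have hchain : (FreeGroup.invRev y ++ x).Chain' Rel := by
    refine hinv.append hcx ?_
    intro p hp q hq
    have hyne : y ≠ [] := by
      intro hy0
      subst hy0
      simp [FreeGroup.invRev] at hp
    have hxne : x ≠ [] := by
      intro hx0; subst hx0; simp at hq
    have hp' : p ∈ (y.head?).map (fun g : α × Bool => (g.1, !g.2)) := by
      rwa [FreeGroup.invRev, List.getLast?_reverse, List.head?_map] at hp
    obtain ⟨y₀, hy₀⟩ : ∃ y₀, y.head? = some y₀ := by
      cases y
      · exact absurd rfl hyne
      · exact ⟨_, rfl⟩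
    have hpv : p = (y₀.1, !y₀.2) := by
      rw [hy₀] at hp'
      simpa [eq_comm] using hp'
    subst hpv
    have hq' : x.head? = some q := hq
    have hne : q ≠ y₀ := by
      intro hqe
      apply hxne
      apply hhd
      rw [hq', hy₀, hqe]
    rintro ⟨e1, e2⟩
    apply hne
    have b1 : q.1 = y₀.1 := by simpa using e1.symm
    have b2 : q.2 = y₀.2 := by
      have := e2.symm
      simp only at this
      cases hq2 : q.2 <;> cases hy2 : y₀.2 <;> simp_all
    exact Prod.ext b1 b2
  have hnorm : (h⁻¹ * g).norm = y.length + x.length := by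
    rw [hgh, norm_mk_eq hchain, List.length_append, FreeGroup.invRev_length]
  have h1 : g.norm = c.length + x.length := by
    rw [norm_toWord, ← hw₁, ← hx, List.length_append]
  have h2 : h.norm = c.length + y.length := by
    rw [norm_toWord, ← hw₂, ← hy, List.length_append]
  omega


/-! ### Enumerating the edges of the geodesic from `1` to `g` -/

/-- Enumerate the edges along a word, given the prefix read so far. For a letter
`(j, true)` at prefix `s` the recorded vertex is `mk s`; for `(j, false)` it is
`mk (s ++ [(j, false)])` (the endpoint closer to the identity... actually the
endpoint `u` such that the edge is `(u, u·aⱼ)`). -/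
def edgesL : List (α × Bool) → List (α × Bool) → List ((FreeGroup α × α) × Bool)
  | _, [] => []
  | pre, (j, b) :: rest =>
      ((FreeGroup.mk (pre ++ if b then [] else [(j, b)]), j), b) ::
        edgesL (pre ++ [(j, b)]) rest

lemma length_edgesL : ∀ (pre rest : List (α × Bool)), (edgesL pre rest).length = rest.length
  | _, [] => rfl
  | pre, (j, b) :: rest => by
    simp [edgesL, length_edgesL (pre ++ [(j, b)]) rest]

lemma mem_edgesL : ∀ {pre rest : List (α × Bool)} {u : FreeGroup α} {j : α} {b : Bool},
    ((u, j), b) ∈ edgesL pre rest ↔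
      ∃ s t, rest = s ++ (j, b) :: t ∧
        u = FreeGroup.mk ((pre ++ s) ++ if b then [] else [(j, b)])
  | pre, [], u, j, b => by
    simp only [edgesL, List.not_mem_nil, false_iff]
    rintro ⟨s, t, hst, -⟩
    cases s <;> simp at hst
  | pre, (j', b') :: rest, u, j, b => by
    simp only [edgesL, List.mem_cons]
    constructor
    · rintro (heq | hmem)
      · rw [Prod.ext_iff, Prod.ext_iff] at heq
        obtain ⟨⟨h1, h2⟩, h3⟩ := heq
        simp only at h1 h2 h3
        subst h2; subst h3
        exact ⟨[], rest, by simp, by simpa using h1⟩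
      · obtain ⟨s, t, hst, hu⟩ := mem_edgesL.mp hmem
        exact ⟨(j', b') :: s, t, by simp [hst], by simpa using hu⟩
    · rintro ⟨s, t, hst, hu⟩
      cases s with
      | nil =>
        left
        simp only [List.nil_append] at hst
        injection hst with h1 h2
        rw [Prod.mk.injEq] at h1
        obtain ⟨rfl, rfl⟩ := h1
        subst h2
        simp [hu]
      | cons a s =>
        right
        rw [List.cons_append, List.cons.injEq] at hst
        obtain ⟨rfl, hst⟩ := hst
        exact mem_edgesL.mpr ⟨s, t, hst, by simpa using hu⟩


/-- The predicate recording an edge of the geodesic from `1` to (the element with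
reduced word) `w`. -/
def EdgeP (w : List (α × Bool)) (u : FreeGroup α) (j : α) (b : Bool) : Prop :=
  (if b then u.toWord else (u * FreeGroup.of j).toWord) ++ [(j, b)] <+: w

lemma toWord_mul_single {v : FreeGroup α} {j : α} {b : Bool}
    (h : (v.toWord ++ [(j, b)]).Chain' Rel) :
    (v * FreeGroup.mk [(j, b)]).toWord = v.toWord ++ [(j, b)] := by
  have hmk : FreeGroup.mk (v.toWord ++ [(j, b)]) = v * FreeGroup.mk [(j, b)] := by
    rw [← FreeGroup.mul_mk, FreeGroup.mk_toWord]
  rw [← hmk, toWord_mk_eq h]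

lemma mem_edgesL_iff {w : List (α × Bool)} (hw : w.Chain' Rel)
    {u : FreeGroup α} {j : α} {b : Bool} :
    ((u, j), b) ∈ edgesL [] w ↔ EdgeP w u j b := by
  rw [mem_edgesL]
  constructor
  · rintro ⟨s, t, rfl, rfl⟩
    cases b
    · -- backward edge
      have hpre : (s ++ [(j, false)]) <+: s ++ (j, false) :: t := ⟨t, by simp⟩
      have hred : (s ++ [(j, false)]).Chain' Rel := hw.prefix hpre
      have hs : s.Chain' Rel := hred.prefix ⟨[(j, false)], rfl⟩
      have hmul : FreeGroup.mk (s ++ [(j, false)]) * FreeGroup.of j = FreeGroup.mk s := by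
        have h' : FreeGroup.mk (s ++ [(j, false)]) =
            FreeGroup.mk s * FreeGroup.mk [(j, false)] := (FreeGroup.mul_mk).symm
        rw [h', ← inv_of_eq]
        group
      unfold EdgeP
      simp only [List.nil_append, Bool.false_eq_true, if_false, hmul, toWord_mk_eq hs]
      exact hpre
    · -- forward edge
      unfold EdgeP
      have hs : s.Chain' Rel := hw.prefix ⟨(j, true) :: t, rfl⟩
      simp only [List.nil_append, if_true, List.append_nil]
      rw [toWord_mk_eq hs]
      exact ⟨t, by simp⟩
  · intro hE
    unfold EdgeP at hE
    cases b
    · simp only [if_neg Bool.false_ne_true] at hE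
      obtain ⟨t, ht⟩ := hE
      refine ⟨(u * FreeGroup.of j).toWord, t, by simpa using ht.symm, ?_⟩
      simp only [List.nil_append, if_neg Bool.false_ne_true]
      rw [← FreeGroup.mul_mk, FreeGroup.mk_toWord, ← inv_of_eq]
      group
    · simp only [if_pos rfl] at hE
      obtain ⟨t, ht⟩ := hE
      exact ⟨u.toWord, t, by simpa using ht.symm, by simp [FreeGroup.mk_toWord]⟩

lemma nodup_edgesL : ∀ {pre rest : List (α × Bool)}, ((pre ++ rest).Chain' Rel) →
    (edgesL pre rest).Nodup
  | pre, [], _ => by simp [edgesL]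
  | pre, (j, b) :: rest, h => by
    have hrec : ((pre ++ [(j, b)]) ++ rest).Chain' Rel := by simpa using h
    rw [edgesL, List.nodup_cons]
    refine ⟨?_, nodup_edgesL hrec⟩
    intro hmem
    obtain ⟨s, t, hrest, hu⟩ := mem_edgesL.mp hmem
    have hW : pre ++ (j, b) :: rest =
        (((pre ++ [(j, b)]) ++ s) ++ if b then [] else [(j, b)]) ++
          (if b then (j, b) :: t else t) := by
      rw [hrest]; cases b <;> simp
    have h1 : (pre ++ if b then [] else [(j, b)]).Chain' Rel := by
      refine h.prefix ?_
      cases b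
      · exact ⟨rest, by simp⟩
      · exact ⟨(j, true) :: rest, by simp⟩
    have h2 : (((pre ++ [(j, b)]) ++ s) ++ if b then [] else [(j, b)]).Chain' Rel := by
      refine h.prefix ?_
      rw [hW]
      exact ⟨_, rfl⟩
    have := congrArg FreeGroup.toWord hu
    rw [toWord_mk_eq h1, toWord_mk_eq h2] at this
    have hlen := congrArg List.length this
    simp only [List.length_append, apply_ite List.length, List.length_cons,
      List.length_nil] at hlen
    cases b <;> simp at hlen <;> omega

/-- The finset of (forward if `b`, backward otherwise) edges of the geodesic. -/
def edgeFinset (b : Bool) (w : List (α × Bool)) : Finset (FreeGroup α × α) :=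
  (((edgesL ([] : List (α × Bool)) w).filter (fun x => x.2 = b)).map Prod.fst).toFinset

lemma mem_edgeFinset {w : List (α × Bool)} {b : Bool} {p : FreeGroup α × α} :
    p ∈ edgeFinset b w ↔ (p, b) ∈ edgesL [] w := by
  simp only [edgeFinset, List.mem_toFinset, List.mem_map, List.mem_filter]
  constructor
  · rintro ⟨x, ⟨hx, hxb⟩, rfl⟩
    have : x = (x.1, b) := by
      rw [Prod.ext_iff]
      simpa using of_decide_eq_true hxb
    rwa [← this]
  · intro h
    exact ⟨(p, b), ⟨h, by simp⟩, rfl⟩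

lemma card_edgeFinset_add {w : List (α × Bool)} (hw : w.Chain' Rel) :
    (edgeFinset true w).card + (edgeFinset false w).card = w.length := by
  have hnd : (edgesL ([] : List (α × Bool)) w).Nodup := nodup_edgesL (by simpa using hw)
  have hcard : ∀ b, (edgeFinset b w).card =
      ((edgesL ([] : List (α × Bool)) w).filter (fun x => x.2 = b)).length := by
    intro b
    rw [edgeFinset, List.toFinset_card_of_nodup]
    · rw [List.length_map]
    · refine List.Nodup.map_on ?_ (hnd.filter _)
      intro x hx y hy hxy
      have hxb := of_decide_eq_true (List.mem_filter.mp hx).2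
      have hyb := of_decide_eq_true (List.mem_filter.mp hy).2
      exact Prod.ext hxy (hxb.trans hyb.symm)
  rw [hcard, hcard]
  rw [← length_edgesL ([] : List (α × Bool)) w]
  have : ∀ x : (FreeGroup α × α) × Bool, (x.2 = false) = ¬(x.2 = true) := by
    intro x; cases x.2 <;> simp
  rw [show (fun x : (FreeGroup α × α) × Bool => decide (x.2 = false)) =
      (fun x => !decide (x.2 = true)) by funext x; cases x.2 <;> simp]
  exact (List.length_eq_length_filter_add _).symm


lemma edgeFinset_inter {w₁ w₂ : List (α × Bool)} (h1 : w₁.Chain' Rel)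
    (h2 : w₂.Chain' Rel) (b : Bool) :
    edgeFinset b w₁ ∩ edgeFinset b w₂ = edgeFinset b (cp w₁ w₂) := by
  have hc : (cp w₁ w₂).Chain' Rel := h1.prefix (cp_prefix_left _ _)
  ext ⟨u, j⟩
  simp only [Finset.mem_inter, mem_edgeFinset, mem_edgesL_iff h1, mem_edgesL_iff h2,
    mem_edgesL_iff hc, EdgeP]
  exact prefix_cp_iff.symm

lemma edgeFinset_cross {w₁ w₂ : List (α × Bool)} (h1 : w₁.Chain' Rel)
    (h2 : w₂.Chain' Rel) :
    edgeFinset true w₁ ∩ edgeFinset false w₂ = ∅ := by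
  ext ⟨u, j⟩
  simp only [Finset.mem_inter, mem_edgeFinset, mem_edgesL_iff h1, mem_edgesL_iff h2,
    EdgeP, if_true, Bool.false_eq_true, if_false, Finset.notMem_empty, iff_false]
  rintro ⟨hf, hb⟩
  have e1 : (u * FreeGroup.of j).toWord = u.toWord ++ [(j, true)] := by
    rw [of_eq_mk]
    exact toWord_mul_single (h1.prefix hf)
  have e3 : (u * FreeGroup.of j) * FreeGroup.mk [(j, false)] = u := by
    rw [← inv_of_eq]; group
  have e2 : u.toWord = (u * FreeGroup.of j).toWord ++ [(j, false)] := by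
    have e2' := toWord_mul_single (h2.prefix hb)
    rw [e3] at e2'
    exact e2'.symm ▸ e2'
  have l1 := congrArg List.length e1
  have l2 := congrArg List.length e2
  simp only [List.length_append, List.length_cons, List.length_nil] at l1 l2
  omega

lemma inner_sum_sum {H : Type*} [NormedAddCommGroup H] [InnerProductSpace ℝ H]
    {ι : Type*} [DecidableEq ι] {e : ι → H} (he : Orthonormal ℝ e) (s t : Finset ι) :
    (inner ℝ (∑ p ∈ s, e p) (∑ q ∈ t, e q) : ℝ) = ((s ∩ t).card : ℝ) := by
  rw [sum_inner]
  have hpt : ∀ p, (inner ℝ (e p) (∑ q ∈ t, e q) : ℝ) = if p ∈ t then 1 else 0 := by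
    intro p
    rw [inner_sum]
    simp_rw [orthonormal_iff_ite.mp he]
    simp [Finset.sum_ite_eq]
  simp_rw [hpt]
  rw [Finset.sum_boole, Finset.filter_mem_eq_inter]


lemma fwdEdges_eq (N : ℕ) (g : FreeGroup (Fin N)) :
    fwdEdges N g = ↑(edgeFinset true g.toWord) := by
  ext ⟨u, j⟩
  simp only [fwdEdges, Set.mem_setOf_eq, Finset.mem_coe, mem_edgeFinset,
    mem_edgesL_iff (toWord_chain' g), EdgeP, if_true]
  rw [of_eq_mk]
  exact edge_norm_iff u g j true

lemma bwdEdges_eq (N : ℕ) (g : FreeGroup (Fin N)) :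
    bwdEdges N g = ↑(edgeFinset false g.toWord) := by
  ext ⟨u, j⟩
  simp only [bwdEdges, Set.mem_setOf_eq, Finset.mem_coe, mem_edgeFinset,
    mem_edgesL_iff (toWord_chain' g), EdgeP, Bool.false_eq_true, if_false]
  have hu : u⁻¹ = ((u * FreeGroup.of j) * FreeGroup.mk [(j, false)])⁻¹ := by
    rw [← inv_of_eq]; group
  rw [hu]
  exact edge_norm_iff (u * FreeGroup.of j) g j false

end HaagerupAux

/-- Haagerup's construction: let `{e_{(u,j)}}` be an orthonormal family in a real Hilbert
space `H_Λ` indexed by the edges `Λ` of the Cayley tree of the free group `G` on `N`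
generators (with the convention `e_{(g,h)} = −e_{(h,g)}` when `g⁻¹h` is an inverse
generator), and let `Φ(g) = e_{(f₀,f₁)} + ⋯ + e_{(f_{n−1},f_n)}` where `f₀ = 1,
f_ℓ = g₁⋯g_ℓ` is the prefix sequence of the reduced word `g = g₁⋯g_n`.  Then
`‖Φ(g) − Φ(h)‖² = |h⁻¹ g|` for all `g, h`; in particular `Φ` is injective. -/
theorem haagerup_map_dist_sq (N : ℕ)
    {H : Type*} [NormedAddCommGroup H] [InnerProductSpace ℝ H] [CompleteSpace H]
    (e : FreeGroup (Fin N) × Fin N → H) (he : Orthonormal ℝ e)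
    (Φ : FreeGroup (Fin N) → H)
    (hΦ : ∀ g, Φ g = (∑ᶠ p ∈ fwdEdges N g, e p) - ∑ᶠ p ∈ bwdEdges N g, e p) :
    (∀ g h : FreeGroup (Fin N),
      ‖Φ g - Φ h‖ ^ 2 = (FreeGroup.norm (h⁻¹ * g) : ℝ)) ∧
    Function.Injective Φ := by
  open HaagerupAux in
  have key : ∀ g h : FreeGroup (Fin N),
      ‖Φ g - Φ h‖ ^ 2 = (FreeGroup.norm (h⁻¹ * g) : ℝ) := by
    intro g h
    have hw1 := toWord_chain' g
    have hw2 := toWord_chain' h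
    set w₁ := g.toWord with hww1
    set w₂ := h.toWord with hww2
    set F₁ := edgeFinset true w₁ with hF₁
    set B₁ := edgeFinset false w₁ with hB₁
    set F₂ := edgeFinset true w₂ with hF₂
    set B₂ := edgeFinset false w₂ with hB₂
    have hΦg : Φ g = (∑ p ∈ F₁, e p) - ∑ p ∈ B₁, e p := by
      rw [hΦ g, fwdEdges_eq N g, bwdEdges_eq N g, finsum_mem_coe_finset,
        finsum_mem_coe_finset]
    have hΦh : Φ h = (∑ p ∈ F₂, e p) - ∑ p ∈ B₂, e p := by
      rw [hΦ h, fwdEdges_eq N h, bwdEdges_eq N h, finsum_mem_coe_finset,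
        finsum_mem_coe_finset]
    have hc : (cp w₁ w₂).Chain' Rel := hw1.prefix (cp_prefix_left _ _)
    have c1 : F₁.card + B₁.card = w₁.length := card_edgeFinset_add hw1
    have c2 : F₂.card + B₂.card = w₂.length := card_edgeFinset_add hw2
    have cc : (F₁ ∩ F₂).card + (B₁ ∩ B₂).card = (cp w₁ w₂).length := by
      rw [hF₁, hF₂, hB₁, hB₂, edgeFinset_inter hw1 hw2 true,
        edgeFinset_inter hw1 hw2 false]
      exact card_edgeFinset_add hc
    have hcp : (h⁻¹ * g).norm + 2 * (cp w₁ w₂).length = g.norm + h.norm :=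
      norm_inv_mul_add g h
    have hg : g.norm = w₁.length := rfl
    have hh : h.norm = w₂.length := rfl
    have X11 : F₁ ∩ B₁ = ∅ := edgeFinset_cross hw1 hw1
    have X12 : F₁ ∩ B₂ = ∅ := edgeFinset_cross hw1 hw2
    have X21 : F₂ ∩ B₁ = ∅ := edgeFinset_cross hw2 hw1
    have X22 : F₂ ∩ B₂ = ∅ := edgeFinset_cross hw2 hw2
    have Y11 : B₁ ∩ F₁ = ∅ := by rw [Finset.inter_comm]; exact X11
    have Y12 : B₂ ∩ F₁ = ∅ := by rw [Finset.inter_comm]; exact X12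
    have Y21 : B₁ ∩ F₂ = ∅ := by rw [Finset.inter_comm]; exact X21
    have Y22 : B₂ ∩ F₂ = ∅ := by rw [Finset.inter_comm]; exact X22
    rw [hΦg, hΦh, ← real_inner_self_eq_norm_sq]
    simp only [inner_sub_left, inner_sub_right, inner_sum_sum he]
    rw [Finset.inter_comm F₂ F₁, Finset.inter_comm B₂ B₁]
    simp only [Finset.inter_self, X11, X12, X21, X22, Y11, Y12, Y21, Y22,
      Finset.card_empty, Nat.cast_zero]
    have c1' : (F₁.card : ℝ) + B₁.card = w₁.length := by exact_mod_cast c1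
    have c2' : (F₂.card : ℝ) + B₂.card = w₂.length := by exact_mod_cast c2
    have cc' : ((F₁ ∩ F₂).card : ℝ) + (B₁ ∩ B₂).card = (cp w₁ w₂).length := by
      exact_mod_cast cc
    have hcp' : ((h⁻¹ * g).norm : ℝ) + 2 * (cp w₁ w₂).length = w₁.length + w₂.length := by
      rw [← hg, ← hh]; exact_mod_cast hcp
    linarith
  refine ⟨key, fun g h heq => ?_⟩
  have h0 := key g h
  rw [heq, sub_self, norm_zero] at h0
  have h1 : FreeGroup.norm (h⁻¹ * g) = 0 := by
    have h2 : (FreeGroup.norm (h⁻¹ * g) : ℝ) = 0 := by rw [← h0]; norm_num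
    exact_mod_cast h2
  exact (inv_mul_eq_one.mp (FreeGroup.norm_eq_zero.mp h1)).symm
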